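/- Let G be a stochastic game that is stopping under fairness with terminal set T, let σ1 be a memoryless strategy for Player 1 and σ2 a memoryless fair strategy for Player 2. Then for every v ∈ V, Σ_{N=1}^∞ Σ_{ŵ ∈ (V∖T)^N} Prob^{σ1,σ2}_{G,v}(ŵ) < ∞, where the inner sum ranges over all finite sequences ŵ of length N consisting of non-terminal vertices and Prob^{σ1,σ2}_{G,v}(ŵ) denotes the measure of the cylinder of ŵ. -/

import Mathlib

open MeasureTheory
open scoped ENNReal Classical

/-- A turn-based two-player stochastic game on a finite vertex set `V`. -/
structure StochGame (V : Type*) [Fintype V] where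
  /-- Player 1 vertices -/
  V1 : Finset V
  /-- Player 2 vertices -/
  V2 : Finset V
  /-- probabilistic vertices -/
  VP : Finset V
  cover : ∀ v : V, v ∈ V1 ∨ v ∈ V2 ∨ v ∈ VP
  disj12 : ∀ v : V, ¬(v ∈ V1 ∧ v ∈ V2)
  disj1P : ∀ v : V, ¬(v ∈ V1 ∧ v ∈ VP)
  disj2P : ∀ v : V, ¬(v ∈ V2 ∧ v ∈ VP)
  /-- the probabilistic transition function -/
  δ : V → V → ℝ
  δ_nonneg : ∀ v v', 0 ≤ δ v v'
  δ_le_one : ∀ v v', δ v v' ≤ 1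
  det : ∀ v : V, (v ∈ V1 ∨ v ∈ V2) → ∀ v', δ v v' = 0 ∨ δ v v' = 1
  prob : ∀ v ∈ VP, ∑ v' : V, δ v v' = 1
  post_nonempty : ∀ v : V, ∃ v', 0 < δ v v'

namespace StochGame

variable {V : Type*} [Fintype V]

/-- successors of a vertex -/
def post (G : StochGame V) (v : V) : Set V := {v' | 0 < G.δ v v'}

/-- a vertex is terminal if `δ(v,v) = 1` and `δ(v,v') = 0` for `v' ≠ v`. -/
def Terminal (G : StochGame V) (v : V) : Prop :=
  G.δ v v = 1 ∧ ∀ v', v' ≠ v → G.δ v v' = 0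

/-- A strategy for the player owning the vertices in `P`: a function assigning to each
finite history and current vertex a probability distribution over vertices, supported
on successors when the current vertex belongs to `P`. -/
structure Strategy (G : StochGame V) (P : Finset V) where
  f : List V → V → V → ℝ
  nonneg : ∀ h v v', 0 ≤ f h v v'
  sum_one : ∀ h v, ∑ v' : V, f h v v' = 1
  support : ∀ h v, v ∈ P → ∀ v', 0 < f h v v' → 0 < G.δ v v'

variable {G : StochGame V} {P : Finset V}

/-- a memoryless strategy only depends on the current vertex -/
def Strategy.Memoryless (σ : Strategy G P) : Prop :=
  ∀ h h' cur, σ.f h cur = σ.f h' cur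

/-- a deterministic (pure) strategy takes Dirac distributions as values -/
def Strategy.Deterministic (σ : Strategy G P) : Prop :=
  ∀ h cur, ∃ v', ∀ u, σ.f h cur u = if u = v' then 1 else 0

/-- a semi-Markov strategy depends only on the initial vertex, the number of elapsed
steps and the current vertex -/
def Strategy.SemiMarkov (σ : Strategy G P) : Prop :=
  ∀ (v0 : V) (h h' : List V) (cur : V), h.length = h'.length →
    σ.f (v0 :: h) cur = σ.f (v0 :: h') cur

variable [DecidableEq V]

/-- one-step transition probability given strategies of both players -/
noncomputable def step (G : StochGame V) (σ1 : Strategy G G.V1) (σ2 : Strategy G G.V2)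
    (h : List V) (v v' : V) : ℝ :=
  if v ∈ G.V1 then σ1.f h v v' else if v ∈ G.V2 then σ2.f h v v' else G.δ v v'

/-- the history consisting of the first `i` vertices of `w` -/
def hist (w : ℕ → V) (i : ℕ) : List V := (List.range i).map w

/-- probability that the play starts with the vertices `w 0, w 1, …, w n` when
the game starts at `v` and the players use strategies `σ1`, `σ2`. -/
noncomputable def prefixProb (G : StochGame V) (σ1 : Strategy G G.V1) (σ2 : Strategy G G.V2)
    (v : V) (n : ℕ) (w : ℕ → V) : ℝ :=
  (if w 0 = v then 1 else 0) *
    ∏ i ∈ Finset.range n, G.step σ1 σ2 (hist w i) (w i) (w (i + 1))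

/-- the cylinder of all infinite plays agreeing with `w` on the first `n+1` coordinates -/
def cyl (n : ℕ) (w : ℕ → V) : Set (ℕ → V) := {ω | ∀ i ≤ n, ω i = w i}

variable [MeasurableSpace V]

/-- `μ` is the path measure of the game `G` starting at `v` under strategies `σ1, σ2`:
it is the (unique) probability measure on `V^ω` (with the product σ-algebra) whose
cylinder probabilities are given by the products of the transition probabilities. -/
def IsPathMeasure (G : StochGame V) (σ1 : Strategy G G.V1) (σ2 : Strategy G G.V2)
    (v : V) (μ : Measure (ℕ → V)) : Prop :=
  IsProbabilityMeasure μ ∧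
    ∀ (n : ℕ) (w : ℕ → V), μ (cyl n w) = ENNReal.ofReal (G.prefixProb σ1 σ2 v n w)

/-- the set of vertices occurring infinitely often in a play -/
def infOcc (ω : ℕ → V) : Set V := {u | ∀ N, ∃ n, N ≤ n ∧ ω n = u}

/-- the set of plays that are fair for Player 2 -/
def FP2 (G : StochGame V) : Set (ℕ → V) :=
  {ω | ∀ u ∈ G.V2, u ∈ infOcc ω → ∀ u' ∈ G.post u, u' ∈ infOcc ω}

/-- the event `◇T` that a terminal vertex is reached -/
def ReachT (G : StochGame V) : Set (ℕ → V) := {ω | ∃ i, G.Terminal (ω i)}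

/-- A Player 2 strategy is (almost surely) fair if the fair plays have probability 1
under any Player 1 strategy and any initial vertex. -/
def Fair (G : StochGame V) (σ2 : Strategy G G.V2) : Prop :=
  ∀ (σ1 : Strategy G G.V1) (v : V) (μ : Measure (ℕ → V)),
    G.IsPathMeasure σ1 σ2 v μ → μ G.FP2 = 1

/-- `G` is stopping under fairness: a terminal vertex is reached almost surely
whenever Player 2 plays a fair strategy. -/
def StoppingUnderFairness (G : StochGame V) : Prop :=
  ∀ (σ1 : Strategy G G.V1) (σ2 : Strategy G G.V2), G.Fair σ2 →
    ∀ (v : V) (μ : Measure (ℕ → V)), G.IsPathMeasure σ1 σ2 v μ → μ G.ReachT = 1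

/-- the total accumulated reward of a play -/
noncomputable def rew (r : V → ℝ) (ω : ℕ → V) : ℝ≥0∞ := ∑' i, ENNReal.ofReal (r (ω i))

/-- the expected total reward -/
noncomputable def expRew (μ : Measure (ℕ → V)) (r : V → ℝ) : ℝ≥0∞ := ∫⁻ ω, rew r ω ∂μ

end StochGame


/- ===== auxiliary machinery for the main theorem ===== -/

namespace SGAux

open scoped NNReal

variable {V : Type*} [Fintype V]

noncomputable def matH (q : V → V → ℝ≥0) (B : V → Prop) : ℕ → V → ℝ≥0
  | 0, u => if B u then 1 else 0
  | n+1, u => if B u then ∑ u', q u u' * matH q B n u' else 0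

lemma matH_succ_def (q : V → V → ℝ≥0) (B : V → Prop) (n : ℕ) (u : V) :
    matH q B (n+1) u = if B u then ∑ u', q u u' * matH q B n u' else 0 := by
  simp only [matH]

lemma matH_zero_of_not {q : V → V → ℝ≥0} {B : V → Prop} {u : V} (h : ¬ B u) :
    ∀ n, matH q B n u = 0 := by
  rintro (_|n) <;> simp [matH, h]

lemma matH_le_one {q : V → V → ℝ≥0} {B : V → Prop} (hq : ∀ u, ∑ u', q u u' ≤ 1) :
    ∀ n u, matH q B n u ≤ 1 := by
  intro n
  induction n with
  | zero =>
    intro u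
    simp only [matH]
    split <;> simp
  | succ n ih =>
    intro u
    simp only [matH]
    split
    · calc ∑ u', q u u' * matH q B n u' ≤ ∑ u', q u u' * 1 :=
            Finset.sum_le_sum fun i _ => mul_le_mul_right (ih i) _
        _ ≤ 1 := by simpa using hq u
    · simp

lemma matH_succ_le {q : V → V → ℝ≥0} {B : V → Prop} (hq : ∀ u, ∑ u', q u u' ≤ 1) :
    ∀ n u, matH q B (n+1) u ≤ matH q B n u := by
  intro n
  induction n with
  | zero =>
    intro u
    have h1 := matH_le_one (B := B) hq 1 u
    have : matH q B 0 u = if B u then 1 else 0 := rfl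
    rw [this]
    split
    · simpa using h1
    · simp [matH_zero_of_not ‹¬ B u›]
  | succ n ih =>
    intro u
    simp only [matH]
    split
    · exact Finset.sum_le_sum fun i _ => mul_le_mul_right (ih i) _
    · exact le_refl 0

lemma matH_le_of_le {q : V → V → ℝ≥0} {B : V → Prop} (hq : ∀ u, ∑ u', q u u' ≤ 1)
    {m n : ℕ} (h : m ≤ n) : ∀ u, matH q B n u ≤ matH q B m u := by
  induction n with
  | zero => intro u; rw [Nat.le_zero.mp h]
  | succ n ih =>
    intro u
    rcases Nat.lt_or_ge m (n+1) with h'|h'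
    · exact (matH_succ_le hq n u).trans (ih (Nat.lt_succ_iff.mp h') u)
    · have : m = n + 1 := le_antisymm h h'
      rw [this]

lemma matH_add_le {q : V → V → ℝ≥0} {B : V → Prop} {m : ℕ} {c : ℝ≥0}
    (hc : ∀ u, matH q B m u ≤ c) : ∀ n u, matH q B (n + m) u ≤ matH q B n u * c := by
  intro n
  induction n with
  | zero =>
    intro u
    by_cases hB : B u
    · have : matH q B 0 u = 1 := by simp [matH, hB]
      simpa [this] using hc u
    · simp [matH_zero_of_not hB]
  | succ n ih =>
    intro u
    have : n + 1 + m = (n + m) + 1 := by omega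
    rw [this]
    simp only [matH]
    split
    · rw [Finset.sum_mul]
      exact Finset.sum_le_sum fun i _ => by
        rw [mul_assoc]; exact mul_le_mul_right (ih i) _
    · simp

lemma matH_exists_lt_one {q : V → V → ℝ≥0} {B : V → Prop} (hq : ∀ u, ∑ u', q u u' ≤ 1)
    {u t : V} (hp : Relation.ReflTransGen (fun a b => 0 < q a b) u t) (ht : ¬ B t) :
    ∃ n, matH q B n u < 1 := by
  induction hp using Relation.ReflTransGen.head_induction_on with
  | refl => exact ⟨0, by simp [matH, ht]⟩
  | head hab _ ih =>
    rename_i a b _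
    obtain ⟨n, hn⟩ := ih
    refine ⟨n + 1, ?_⟩
    simp only [matH]
    split
    · calc ∑ u', q a u' * matH q B n u'
          < ∑ u', q a u' * 1 := by
            refine Finset.sum_lt_sum (fun i _ => mul_le_mul_right (matH_le_one hq n i) _)
              ⟨b, Finset.mem_univ b, ?_⟩
            exact mul_lt_mul_of_pos_left hn hab
        _ ≤ 1 := by simpa using hq a
    · exact zero_lt_one

lemma sum_words (q : V → V → ℝ≥0) (B : V → Prop) :
    ∀ (n : ℕ) (u : V),
      (∑ w : Fin (n+1) → V,
        if (∀ i, B (w i)) ∧ w 0 = u then ∏ i : Fin n, q (w i.castSucc) (w i.succ) else 0)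
        = matH q B n u := by
  intro n
  induction n with
  | zero =>
    intro u
    rw [← (Equiv.funUnique (Fin 1) V).symm.sum_comp]
    have : ∀ x : V, (if (∀ i : Fin 1, B (((Equiv.funUnique (Fin 1) V).symm x) i)) ∧
        ((Equiv.funUnique (Fin 1) V).symm x) 0 = u then
          ∏ i : Fin 0, q ((Equiv.funUnique (Fin 1) V).symm x i.castSucc)
            ((Equiv.funUnique (Fin 1) V).symm x i.succ) else 0)
        = if x = u then (if B x then (1:ℝ≥0) else 0) else 0 := by
      intro x
      simp only [Equiv.funUnique_symm_apply, Function.const]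
      split_ifs with h1 h2 h3 h4 <;> simp_all
    rw [Finset.sum_congr rfl fun x _ => this x, Finset.sum_ite_eq' Finset.univ u]
    simp [matH]
  | succ n ih =>
    intro u
    rw [← (Fin.consEquiv (fun _ : Fin (n+2) => V)).sum_comp, Fintype.sum_prod_type]
    have key : ∀ (x : V) (t : Fin (n+1) → V),
        (if (∀ i, B ((Fin.consEquiv (fun _ : Fin (n+2) => V)) (x, t) i)) ∧
            (Fin.consEquiv (fun _ : Fin (n+2) => V)) (x, t) 0 = u then
          ∏ i : Fin (n+1), q ((Fin.consEquiv (fun _ : Fin (n+2) => V)) (x, t) i.castSucc)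
            ((Fin.consEquiv (fun _ : Fin (n+2) => V)) (x, t) i.succ) else 0)
        = if x = u then (if B x then
            (if (∀ i, B (t i)) then q x (t 0) * ∏ i : Fin n, q (t i.castSucc) (t i.succ)
             else 0) else 0) else 0 := by
      intro x t
      have hcons : ∀ i, (Fin.consEquiv (fun _ : Fin (n+2) => V)) (x, t) i
          = Fin.cons (α := fun _ => V) x t i := fun i => rfl
      have hcond : ((∀ i, B (Fin.cons (α := fun _ => V) x t i)) ∧
            Fin.cons (α := fun _ => V) x t 0 = u)
          ↔ ((x = u) ∧ B x ∧ ∀ i, B (t i)) := by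
        rw [Fin.forall_fin_succ]
        simp only [Fin.cons_succ, Fin.cons_zero]
        tauto
      have hprod : (∏ i : Fin (n+1), q (Fin.cons (α := fun _ => V) x t i.castSucc)
            (Fin.cons (α := fun _ => V) x t i.succ))
          = q x (t 0) * ∏ i : Fin n, q (t i.castSucc) (t i.succ) := by
        rw [Fin.prod_univ_succ, Fin.castSucc_zero, Fin.cons_zero, Fin.cons_succ]
        refine congrArg (fun z => q x (t 0) * z) ?_
        refine Finset.prod_congr rfl fun i _ => ?_
        rw [← Fin.succ_castSucc]
        simp [Fin.cons_succ]
      simp only [hcons]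
      split_ifs with h1 h2 h3 h4 h5 h6 h7 <;>
        first
        | (exact hprod)
        | rfl
        | (exfalso; exact absurd (hcond.mp h1) (by tauto))
        | (exfalso; exact absurd (hcond.mpr (by tauto)) h1)
    rw [Finset.sum_congr rfl fun x _ => Finset.sum_congr rfl fun t _ => key x t]
    have pull : ∀ x : V, (∑ t : Fin (n+1) → V, if x = u then
        (if B x then (if (∀ i, B (t i)) then q x (t 0) * ∏ i : Fin n, q (t i.castSucc) (t i.succ)
          else 0) else 0) else 0)
        = if x = u then (∑ t : Fin (n+1) → V, if B x then
            (if (∀ i, B (t i)) then q x (t 0) * ∏ i : Fin n, q (t i.castSucc) (t i.succ)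
             else 0) else 0) else 0 := by
      intro x; split_ifs <;> simp
    rw [Finset.sum_congr rfl fun x _ => pull x]
    rw [Finset.sum_ite_eq' Finset.univ u]
    simp only [Finset.mem_univ, if_true]
    by_cases hB : B u
    · simp only [hB, if_true]
      have expand : ∀ t : Fin (n+1) → V,
          (if (∀ i, B (t i)) then q u (t 0) * ∏ i : Fin n, q (t i.castSucc) (t i.succ) else 0)
          = ∑ u', q u u' * (if (∀ i, B (t i)) ∧ t 0 = u'
              then ∏ i : Fin n, q (t i.castSucc) (t i.succ) else 0) := by
        intro t
        have : ∀ u', q u u' * (if (∀ i, B (t i)) ∧ t 0 = u'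
              then ∏ i : Fin n, q (t i.castSucc) (t i.succ) else 0)
            = if u' = t 0 then (if (∀ i, B (t i))
                then q u u' * ∏ i : Fin n, q (t i.castSucc) (t i.succ) else 0) else 0 := by
          intro u'
          split_ifs <;> simp_all
        rw [Finset.sum_congr rfl fun u' _ => this u', Finset.sum_ite_eq' Finset.univ (t 0)]
        simp
      rw [Finset.sum_congr rfl fun t _ => expand t, Finset.sum_comm]
      have fin : ∀ u' : V, (∑ t : Fin (n+1) → V, q u u' * (if (∀ i, B (t i)) ∧ t 0 = u'
          then ∏ i : Fin n, q (t i.castSucc) (t i.succ) else 0)) = q u u' * matH q B n u' := by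
        intro u'
        rw [← Finset.mul_sum, ih u']
      rw [Finset.sum_congr rfl fun u' _ => fin u']
      simp [matH, hB]
    · simp only [hB, if_false]
      simp [matH, hB]

lemma tsum_matH_lt_top {q : V → V → ℝ≥0} {B : V → Prop}
    (hq : ∀ u, ∑ u', q u u' ≤ 1) (hesc : ∀ u, ∃ n, matH q B n u < 1) (v : V) :
    (∑' N : ℕ, (matH q B N v : ℝ≥0∞)) < ⊤ := by
  choose f hf using hesc
  set n0 : ℕ := (Finset.univ.sup f) + 1 with hn0
  have hn0pos : 0 < n0 := Nat.succ_pos _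
  have hlt : ∀ u, matH q B n0 u < 1 := fun u =>
    lt_of_le_of_lt (matH_le_of_le hq (Nat.le_succ_of_le (Finset.le_sup (Finset.mem_univ u))) u)
      (hf u)
  set c : ℝ≥0 := Finset.univ.sup (fun u => matH q B n0 u) with hc
  have hcu : ∀ u, matH q B n0 u ≤ c := fun u => Finset.le_sup (Finset.mem_univ u)
  have hc1 : c < 1 := by
    rw [hc, Finset.sup_lt_iff (by norm_num : (⊥ : ℝ≥0) < 1)]
    exact fun u _ => hlt u
  have bound : ∀ k r u, matH q B (n0 * k + r) u ≤ c ^ k := by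
    intro k
    induction k with
    | zero => intro r u; simpa using matH_le_one hq r u
    | succ k ih =>
      intro r u
      have he : n0 * (k+1) + r = (n0 * k + r) + n0 := by ring
      rw [he, pow_succ]
      exact (matH_add_le hcu (n0 * k + r) u).trans (mul_le_mul_left (ih r u) c)
  have bound' : ∀ N, matH q B N v ≤ c ^ (N / n0) := by
    intro N
    have := bound (N / n0) (N % n0) v
    rwa [Nat.div_add_mod] at this
  have key : (∑' N : ℕ, (matH q B N v : ℝ≥0∞)) ≤ ∑' N : ℕ, ((c : ℝ≥0∞)) ^ (N / n0) := by
    refine ENNReal.tsum_le_tsum fun N => ?_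
    rw [← ENNReal.coe_pow]
    exact ENNReal.coe_le_coe.mpr (bound' N)
  refine lt_of_le_of_lt key ?_
  haveI : NeZero n0 := ⟨hn0pos.ne'⟩
  let e := (Nat.divModEquiv n0).symm
  have heq : (∑' N : ℕ, ((c : ℝ≥0∞)) ^ (N / n0))
      = ∑' p : ℕ × Fin n0, ((c : ℝ≥0∞)) ^ p.1 := by
    rw [← e.tsum_eq (fun N => ((c : ℝ≥0∞)) ^ (N / n0))]
    refine tsum_congr fun p => ?_
    have he : (e p : ℕ) = p.1 * n0 + (p.2 : ℕ) := rfl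
    rw [he, Nat.add_comm, Nat.add_mul_div_right _ _ hn0pos, Nat.div_eq_of_lt p.2.isLt,
      Nat.zero_add]
  rw [heq, ENNReal.tsum_prod (f := fun (k : ℕ) (_ : Fin n0) => ((c : ℝ≥0∞)) ^ k)]
  have : ∀ k : ℕ, (∑' _ : Fin n0, ((c : ℝ≥0∞)) ^ k) = (n0 : ℝ≥0∞) * (c : ℝ≥0∞) ^ k := by
    intro k; rw [tsum_fintype]; simp [Finset.card_univ, mul_comm]
  simp only [this]
  rw [ENNReal.tsum_mul_left, ENNReal.tsum_geometric]
  refine ENNReal.mul_lt_top (by simp) ?_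
  rw [ENNReal.inv_lt_top]
  rw [tsub_pos_iff_lt]
  exact ENNReal.coe_lt_one_iff.mpr hc1

lemma rtg_path {R : V → V → Prop} {a b : V} (h : Relation.ReflTransGen R a b) :
    ∃ (n : ℕ) (w : ℕ → V), w 0 = a ∧ w n = b ∧ ∀ i, i < n → R (w i) (w (i+1)) := by
  induction h with
  | refl => exact ⟨0, fun _ => a, rfl, rfl, by omega⟩
  | @tail mid last hab hbc ih =>
    obtain ⟨n, w, h0, hn, hs⟩ := ih
    refine ⟨n+1, fun k => if k ≤ n then w k else last, by simpa using h0,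
      by simp [Nat.not_le.mpr (Nat.lt_succ_self n)], ?_⟩
    intro i hi
    rcases Nat.lt_or_ge i n with h'|h'
    · simpa [Nat.le_of_lt h', Nat.succ_le_of_lt h'] using hs i h'
    · have hin : i = n := by omega
      simpa [hin, hn, Nat.not_le.mpr (Nat.lt_succ_self n)] using hbc

lemma chain_rtg {R : V → V → Prop} (w : ℕ → V) (m : ℕ)
    (h : ∀ i, i < m → R (w i) (w (i+1))) :
    ∀ j k, j ≤ k → k ≤ m → Relation.ReflTransGen R (w j) (w k) := by
  intro j k hjk hkm
  induction k, hjk using Nat.le_induction with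
  | base => exact Relation.ReflTransGen.refl
  | succ k hjk ih =>
    exact (ih (by omega)).tail (h k (by omega))

end SGAux

open StochGame in
/-- In a game stopping under fairness, under a memoryless Player 1 strategy and a memoryless
fair Player 2 strategy, the expected time spent in non-terminal vertices is finite:
`Σ_{N=1}^∞ Σ_{ŵ ∈ (V∖T)^N} Prob(ŵ) < ∞`. -/
theorem memoryless_sum_nonterminal_lt_top
    {V : Type*} [Fintype V] [DecidableEq V] [MeasurableSpace V] [DiscreteMeasurableSpace V]
    (G : StochGame V) (hstop : G.StoppingUnderFairness)
    (σ1 : G.Strategy G.V1) (h1 : σ1.Memoryless)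
    (σ2 : G.Strategy G.V2) (h2m : σ2.Memoryless) (h2f : G.Fair σ2)
    (v : V) (μ : Measure (ℕ → V)) (hμ : G.IsPathMeasure σ1 σ2 v μ) :
    (∑' N : ℕ, ∑' w : {w : Fin (N + 1) → V // ∀ i, ¬ G.Terminal (w i)},
      μ {ω : ℕ → V | ∀ i : Fin (N + 1), ω i = w.1 i}) < ⊤ := by
  classical
  obtain ⟨hprob, hcylf⟩ := hμ
  haveI := hprob
  -- one-step transition probabilities as `NNReal`
  set q : V → V → NNReal := fun a b => Real.toNNReal (G.step σ1 σ2 [] a b) with hq_def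
  have step_nonneg : ∀ (h : List V) (a b : V), 0 ≤ G.step σ1 σ2 h a b := by
    intro h a b
    unfold StochGame.step
    split_ifs
    · exact σ1.nonneg _ _ _
    · exact σ2.nonneg _ _ _
    · exact G.δ_nonneg _ _
  have step_hist : ∀ (h : List V) (a b : V), G.step σ1 σ2 h a b = G.step σ1 σ2 [] a b := by
    intro h a b
    unfold StochGame.step
    split_ifs
    · exact congrFun (h1 h [] a) b
    · exact congrFun (h2m h [] a) b
    · rfl
  have q_coe : ∀ a b, ((q a b : NNReal) : ℝ) = G.step σ1 σ2 [] a b := fun a b =>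
    Real.coe_toNNReal _ (step_nonneg [] a b)
  have q_sum : ∀ a, (∑ b, q a b) = 1 := by
    intro a
    have hcoe : ((∑ b, q a b : NNReal) : ℝ) = ∑ b, G.step σ1 σ2 [] a b := by
      rw [NNReal.coe_sum]
      exact Finset.sum_congr rfl fun b _ => q_coe a b
    have hone : (∑ b, G.step σ1 σ2 [] a b) = 1 := by
      unfold StochGame.step
      rcases G.cover a with h|h|h
      · simp only [h, if_true]
        exact σ1.sum_one [] a
      · have h1' : a ∉ G.V1 := fun h' => G.disj12 a ⟨h', h⟩
        simp only [h, h1', if_true, if_false]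
        exact σ2.sum_one [] a
      · have h1' : a ∉ G.V1 := fun h' => G.disj1P a ⟨h', h⟩
        have h2' : a ∉ G.V2 := fun h' => G.disj2P a ⟨h', h⟩
        simp only [h1', h2', if_false]
        exact G.prob a h
    exact NNReal.coe_injective (by rw [hcoe, hone, NNReal.coe_one])
  have q_term : ∀ t b, G.Terminal t → b ≠ t → q t b = 0 := by
    intro t b ht hb
    have hδ : G.δ t b = 0 := ht.2 b hb
    have hs : G.step σ1 σ2 [] t b = 0 := by
      unfold StochGame.step
      split_ifs with hA hB
      · by_contra hne
        have hpos : 0 < σ1.f [] t b := lt_of_le_of_ne (σ1.nonneg _ _ _) (Ne.symm hne)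
        have := σ1.support [] t hA b hpos
        rw [hδ] at this
        exact lt_irrefl _ this
      · by_contra hne
        have hpos : 0 < σ2.f [] t b := lt_of_le_of_ne (σ2.nonneg _ _ _) (Ne.symm hne)
        have := σ2.support [] t hB b hpos
        rw [hδ] at this
        exact lt_irrefl _ this
      · exact hδ
    simp [hq_def, hs]
  -- cylinder measure formula
  have cylm : ∀ (n : ℕ) (w : ℕ → V), μ (StochGame.cyl n w)
      = (((if w 0 = v then 1 else 0) * ∏ i ∈ Finset.range n, q (w i) (w (i+1)) : NNReal) : ℝ≥0∞) := by
    intro n w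
    rw [hcylf n w]
    have hpp : G.prefixProb σ1 σ2 v n w
        = (((if w 0 = v then 1 else 0) * ∏ i ∈ Finset.range n, q (w i) (w (i+1)) : NNReal) : ℝ) := by
      unfold StochGame.prefixProb
      rw [NNReal.coe_mul, NNReal.coe_prod]
      congr 1
      · split_ifs <;> simp
      · exact Finset.prod_congr rfl fun i _ => by rw [q_coe, ← step_hist]
    rw [hpp, ENNReal.ofReal_coe_nnreal]
  -- measurability
  have meas_reach : MeasurableSet G.ReachT := by
    have hre : G.ReachT = ⋃ (i : ℕ), (fun ω : ℕ → V => ω i) ⁻¹' {t | G.Terminal t} := by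
      ext ω
      simp [StochGame.ReachT]
    rw [hre]
    exact MeasurableSet.iUnion fun i => measurable_pi_apply i .of_discrete
  have hreach1 : μ G.ReachT = 1 := hstop σ1 σ2 h2f v μ ⟨hprob, hcylf⟩
  have hreachc : μ G.ReachTᶜ = 0 := by
    rw [measure_compl meas_reach (measure_ne_top μ _), hreach1, measure_univ, tsub_self]
  set R : V → V → Prop := fun a b => 0 < q a b with hR
  have term_stay : ∀ t b, G.Terminal t → Relation.ReflTransGen R t b → b = t := by
    intro t b ht h
    induction h with
    | refl => rfl
    | @tail mid last hab hbc ih =>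
      rw [ih] at hbc
      by_contra hne
      have hq0 : q t last = 0 := q_term t last ht hne
      have hbc2 : 0 < q t last := hbc
      rw [hq0] at hbc2
      exact lt_irrefl _ hbc2
  -- KEY: every reachable non-terminal vertex can reach a terminal vertex
  have key : ∀ u, Relation.ReflTransGen R v u → ¬ G.Terminal u →
      ∃ t, G.Terminal t ∧ Relation.ReflTransGen R u t := by
    intro u hu hnt
    by_contra hcon
    push_neg at hcon
    obtain ⟨n, w, hw0, hwn, hws⟩ := SGAux.rtg_path hu
    have hpos : (0:NNReal) < (if w 0 = v then 1 else 0) * ∏ i ∈ Finset.range n, q (w i) (w (i+1)) := by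
      rw [hw0, if_pos rfl, one_mul]
      refine Finset.prod_pos fun i hi => hws i (Finset.mem_range.mp hi)
    set fext : ∀ m : ℕ, (Fin (m+1) → V) → (ℕ → V) :=
      fun m x k => x ⟨min k m, by omega⟩ with hfext
    set Bad : Set (ℕ → V) := ⋃ (m : ℕ), ⋃ (x : Fin (m+1) → V),
        if μ (StochGame.cyl m (fext m x)) = 0 then StochGame.cyl m (fext m x) else ∅ with hBad
    have hBad0 : μ Bad = 0 := by
      refine measure_iUnion_null fun m => measure_iUnion_null fun x => ?_
      split_ifs with h
      · exact h
      · exact measure_empty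
    have hsub : StochGame.cyl n w ∩ G.ReachT ⊆ Bad := by
      rintro ω ⟨hcyl, i0, hterm⟩
      set m := max i0 n with hm
      set x : Fin (m+1) → V := fun j => ω j with hx
      have hfx : ∀ k, k ≤ m → fext m x k = ω k := by
        intro k hk
        show x ⟨min k m, by omega⟩ = ω k
        show ω ((⟨min k m, by omega⟩ : Fin (m+1)) : ℕ) = ω k
        congr 1
        simp [Nat.min_eq_left hk]
      have homem : ω ∈ StochGame.cyl m (fext m x) := fun k hk => (hfx k hk).symm
      have hz : μ (StochGame.cyl m (fext m x)) = 0 := by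
        rw [cylm]
        by_contra hnz
        have hne : ((if fext m x 0 = v then (1:NNReal) else 0)
            * ∏ i ∈ Finset.range m, q (fext m x i) (fext m x (i+1))) ≠ 0 := by
          intro h0
          rw [h0] at hnz
          simp at hnz
        have hprodne : (∏ i ∈ Finset.range m, q (ω i) (ω (i+1))) ≠ 0 := by
          intro h0
          refine hne ?_
          have heqp : (∏ i ∈ Finset.range m, q (fext m x i) (fext m x (i+1)))
              = ∏ i ∈ Finset.range m, q (ω i) (ω (i+1)) := by
            refine Finset.prod_congr rfl fun i hi => ?_
            have hi' := Finset.mem_range.mp hi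
            rw [hfx i (by omega), hfx (i+1) (by omega)]
          rw [heqp, h0, mul_zero]
        have hsteps : ∀ i, i < m → R (ω i) (ω (i+1)) := by
          intro i hi
          have := Finset.prod_ne_zero_iff.mp hprodne i (Finset.mem_range.mpr hi)
          exact pos_iff_ne_zero.mpr this
        have hωn : ω n = u := by rw [hcyl n (le_refl n), hwn]
        rcases le_or_gt i0 n with hc1|hc1
        · have hrtg : Relation.ReflTransGen R (ω i0) (ω n) :=
            SGAux.chain_rtg ω m hsteps i0 n hc1 (le_max_right i0 n)
          have := term_stay (ω i0) (ω n) hterm hrtg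
          rw [hωn] at this
          rw [this] at hnt
          exact hnt hterm
        · have hrtg : Relation.ReflTransGen R (ω n) (ω i0) :=
            SGAux.chain_rtg ω m hsteps n i0 (Nat.le_of_lt hc1) (le_max_left i0 n)
          rw [hωn] at hrtg
          exact hcon (ω i0) hterm hrtg
      exact Set.mem_iUnion.mpr ⟨m, Set.mem_iUnion.mpr ⟨x, by rw [if_pos hz]; exact homem⟩⟩
    have hzero : μ (StochGame.cyl n w) = 0 := by
      refine le_antisymm ?_ (zero_le)
      calc μ (StochGame.cyl n w)
          ≤ μ (StochGame.cyl n w ∩ G.ReachT) + μ (StochGame.cyl n w \ G.ReachT) :=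
            measure_le_inter_add_diff μ _ _
        _ ≤ μ Bad + μ G.ReachTᶜ := by
            refine add_le_add (measure_mono hsub) (measure_mono ?_)
            intro ω hω
            exact hω.2
        _ = 0 := by rw [hBad0, hreachc, add_zero]
    rw [cylm] at hzero
    exact absurd (ENNReal.coe_eq_zero.mp hzero) (ne_of_gt hpos)
  -- restricted transition matrix
  set B : V → Prop := fun u => ¬ G.Terminal u with hB_def
  set qr : V → V → NNReal := fun a b => if Relation.ReflTransGen R v a then q a b else 0 with hqr_def
  have hqr_le : ∀ a b, qr a b ≤ q a b := by
    intro a b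
    show (if Relation.ReflTransGen R v a then q a b else 0) ≤ q a b
    split_ifs
    · exact le_refl _
    · exact zero_le
  have hqr_sum : ∀ a, (∑ b, qr a b) ≤ 1 := fun a =>
    (Finset.sum_le_sum fun b _ => hqr_le a b).trans (le_of_eq (q_sum a))
  -- escape property
  have hesc : ∀ u, ∃ n, SGAux.matH qr B n u < 1 := by
    intro u
    by_cases hru : Relation.ReflTransGen R v u
    · by_cases hBu : B u
      · obtain ⟨t, hterm, hrt⟩ := key u hru hBu
        have conv : ∀ c, Relation.ReflTransGen R u c →
            Relation.ReflTransGen (fun x y => 0 < qr x y) u c := by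
          intro c hac
          induction hac with
          | refl => exact Relation.ReflTransGen.refl
          | @tail mid last hab hbc ih =>
            refine ih.tail ?_
            have hm : Relation.ReflTransGen R v mid := hru.trans hab
            show 0 < (if Relation.ReflTransGen R v mid then q mid last else 0)
            rw [if_pos hm]
            exact hbc
        exact SGAux.matH_exists_lt_one hqr_sum (conv t hrt) (fun hbt => hbt hterm)
      · exact ⟨0, by simp [SGAux.matH, hBu]⟩
    · refine ⟨1, ?_⟩
      rw [SGAux.matH_succ_def]
      split_ifs
      · have hz : ∀ u' : V, qr u u' * (SGAux.matH qr B 0 u') = 0 := by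
          intro u'
          have hq0 : qr u u' = 0 := if_neg hru
          rw [hq0, zero_mul]
        exact lt_of_le_of_lt (le_of_eq (Finset.sum_eq_zero fun x _ => hz x)) zero_lt_one
      · exact zero_lt_one
  -- products along paths from v are unchanged by the restriction
  have prod_qr : ∀ (wn : ℕ → V), wn 0 = v → ∀ n,
      (∏ i ∈ Finset.range n, qr (wn i) (wn (i+1)))
        = ∏ i ∈ Finset.range n, q (wn i) (wn (i+1)) := by
    intro wn h0 n
    induction n with
    | zero => simp
    | succ n ih =>
      rw [Finset.prod_range_succ, Finset.prod_range_succ, ih]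
      by_cases hz : (∏ i ∈ Finset.range n, q (wn i) (wn (i+1))) = 0
      · rw [hz, zero_mul, zero_mul]
      · have hreach : Relation.ReflTransGen R v (wn n) := by
          rw [← h0]
          refine SGAux.chain_rtg wn n (fun i hi => ?_) 0 n (Nat.zero_le n) (le_refl n)
          exact pos_iff_ne_zero.mpr (Finset.prod_ne_zero_iff.mp hz i (Finset.mem_range.mpr hi))
        have heq : qr (wn n) (wn (n+1)) = q (wn n) (wn (n+1)) := if_pos hreach
        rw [heq]
  -- the inner sums equal the matrix powers
  have inner : ∀ N : ℕ, (∑' w : {w : Fin (N + 1) → V // ∀ i, ¬ G.Terminal (w i)},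
      μ {ω : ℕ → V | ∀ i : Fin (N + 1), ω i = w.1 i}) = ((SGAux.matH qr B N v : NNReal) : ℝ≥0∞) := by
    intro N
    set wext : (Fin (N+1) → V) → ℕ → V := fun w k => w ⟨min k N, by omega⟩ with hwext
    have wext_eq : ∀ (w : Fin (N+1) → V) (k : ℕ) (hk : k ≤ N), wext w k = w ⟨k, by omega⟩ := by
      intro w k hk
      show w ⟨min k N, by omega⟩ = w ⟨k, by omega⟩
      exact congrArg w (Fin.ext (by simp [Nat.min_eq_left hk]))
    have wext0 : ∀ w : Fin (N+1) → V, wext w 0 = w 0 := by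
      intro w
      rw [wext_eq w 0 (Nat.zero_le N)]
      exact congrArg w (Fin.ext (by simp))
    have hset : ∀ w : Fin (N+1) → V,
        {ω : ℕ → V | ∀ i : Fin (N + 1), ω i = w i} = StochGame.cyl N (wext w) := by
      intro w
      ext ω
      simp only [Set.mem_setOf_eq, StochGame.cyl]
      constructor
      · intro h k hk
        rw [wext_eq w k hk]
        exact h ⟨k, by omega⟩
      · intro h i
        have hh := h i (by omega : (i:ℕ) ≤ N)
        rw [wext_eq w i (by omega)] at hh
        rw [hh]
    have hval : ∀ w : Fin (N+1) → V,
        μ {ω : ℕ → V | ∀ i : Fin (N + 1), ω i = w i}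
        = (((if w 0 = v then 1 else 0) *
            ∏ i ∈ Finset.range N, q (wext w i) (wext w (i+1)) : NNReal) : ℝ≥0∞) := by
      intro w
      rw [hset w, cylm, wext0 w]
    have hfinprod : ∀ (m : V → V → NNReal) (w : Fin (N+1) → V),
        (∏ i ∈ Finset.range N, m (wext w i) (wext w (i+1)))
          = ∏ i : Fin N, m (w i.castSucc) (w i.succ) := by
      intro m w
      rw [← Fin.prod_univ_eq_prod_range (fun i => m (wext w i) (wext w (i+1))) N]
      refine Finset.prod_congr rfl fun i _ => ?_
      have e1 : wext w i = w i.castSucc := by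
        rw [wext_eq w i (Nat.le_of_lt i.isLt)]
        exact congrArg w (Fin.ext (by simp))
      have e2 : wext w ((i:ℕ)+1) = w i.succ := by
        rw [wext_eq w ((i:ℕ)+1) i.isLt]
        exact congrArg w (Fin.ext (by simp))
      rw [e1, e2]
    have hterm_eq : ∀ w : Fin (N+1) → V,
        (if (∀ i, ¬ G.Terminal (w i)) then (((if w 0 = v then 1 else 0) *
            ∏ i ∈ Finset.range N, q (wext w i) (wext w (i+1)) : NNReal) : ℝ≥0∞) else 0)
        = (((if (∀ i, B (w i)) ∧ w 0 = v then
            ∏ i : Fin N, qr (w i.castSucc) (w i.succ) else 0 : NNReal)) : ℝ≥0∞) := by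
      intro w
      by_cases hT : ∀ i, ¬ G.Terminal (w i)
      · by_cases h0 : w 0 = v
        · rw [if_pos hT, if_pos h0, if_pos (⟨hT, h0⟩ : (∀ i, B (w i)) ∧ w 0 = v), one_mul,
            ← prod_qr (wext w) (by rw [wext0 w]; exact h0) N, hfinprod qr w]
        · rw [if_pos hT, if_neg h0, if_neg (fun hc : (∀ i, B (w i)) ∧ w 0 = v => h0 hc.2)]
          simp
      · rw [if_neg hT, if_neg (fun hc : (∀ i, B (w i)) ∧ w 0 = v => hT hc.1)]
        simp
    calc (∑' w : {w : Fin (N + 1) → V // ∀ i, ¬ G.Terminal (w i)},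
        μ {ω : ℕ → V | ∀ i : Fin (N + 1), ω i = w.1 i})
        = ∑ w : Fin (N+1) → V, Set.indicator {w : Fin (N+1) → V | ∀ i, ¬ G.Terminal (w i)}
            (fun w => μ {ω : ℕ → V | ∀ i : Fin (N + 1), ω i = w i}) w := by
          have ht := tsum_subtype (s := {w : Fin (N+1) → V | ∀ i, ¬ G.Terminal (w i)})
            (f := fun w : Fin (N+1) → V => μ {ω : ℕ → V | ∀ i : Fin (N + 1), ω i = w i})
          exact ht.trans (tsum_fintype _)
      _ = ∑ w : Fin (N+1) → V, (((if (∀ i, B (w i)) ∧ w 0 = v then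
            ∏ i : Fin N, qr (w i.castSucc) (w i.succ) else 0 : NNReal)) : ℝ≥0∞) := by
          refine Finset.sum_congr rfl fun w _ => ?_
          rw [← hterm_eq w, Set.indicator_apply]
          by_cases hT : ∀ i, ¬ G.Terminal (w i)
          · rw [if_pos (show w ∈ {w : Fin (N+1) → V | ∀ i, ¬ G.Terminal (w i)} from hT),
              if_pos hT, hval w]
          · rw [if_neg (show w ∉ {w : Fin (N+1) → V | ∀ i, ¬ G.Terminal (w i)} from hT),
              if_neg hT]
      _ = (((∑ w : Fin (N+1) → V, if (∀ i, B (w i)) ∧ w 0 = v then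
            ∏ i : Fin N, qr (w i.castSucc) (w i.succ) else 0 : NNReal)) : ℝ≥0∞) :=
          (ENNReal.coe_finset_sum _ _).symm
      _ = ((SGAux.matH qr B N v : NNReal) : ℝ≥0∞) := by
          exact congrArg _ ((Finset.sum_congr rfl (fun w _ => by split_ifs <;> rfl)).trans
            (SGAux.sum_words qr B N v))
  calc (∑' N : ℕ, ∑' w : {w : Fin (N + 1) → V // ∀ i, ¬ G.Terminal (w i)},
      μ {ω : ℕ → V | ∀ i : Fin (N + 1), ω i = w.1 i})
      = ∑' N : ℕ, ((SGAux.matH qr B N v : NNReal) : ℝ≥0∞) := tsum_congr inner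
    _ < ⊤ := SGAux.tsum_matH_lt_top hqr_sum hesc v
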